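/- Let V be a non-discrete valuation ring of finite rank and f ∈ m_V a nonzero element. Then depth_V(V/fV) = 0, i.e., there exists a nonzero element of V/fV annihilated by a power (equivalently, killed after localization away from m_V) of every finitely generated subideal of m_V; concretely, Γ_{m_V}(V/fV) ≠ 0. -/

import Mathlib

open CategoryTheory
open CategoryTheory.Limits
open Opposite

section AuxAlg

variable {V : Type} [CommRing V] [IsDomain V] [ValuationRing V]

/-- A valuation ring of finite Krull dimension has finitely many primes. -/
lemma aux_finite_primes (hrank : ringKrullDim V < ⊤) : Finite (PrimeSpectrum V) := by
  by_contra hfin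
  rw [not_finite_iff_infinite] at hfin
  letI : LinearOrder (PrimeSpectrum V) :=
    { (inferInstance : PartialOrder (PrimeSpectrum V)) with
      le_total := fun a b => ((ValuationRing.le_total_ideal (A := V)).total a.asIdeal b.asIdeal).imp
        (fun h => (PrimeSpectrum.asIdeal_le_asIdeal _ _).mp h)
        (fun h => (PrimeSpectrum.asIdeal_le_asIdeal _ _).mp h)
      toDecidableLE := fun _ _ => Classical.propDecidable _ }
  have : InfiniteDimensionalOrder (PrimeSpectrum V) := by
    constructor
    intro n
    obtain ⟨t, -, ht⟩ := (Set.infinite_univ (α := PrimeSpectrum V)).exists_subset_card_eq (n + 1)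
    exact ⟨⟨n, fun i => t.orderEmbOfFin ht i,
      fun i => (t.orderEmbOfFin ht).strictMono (by simp)⟩, rfl⟩
  have : ringKrullDim V = ⊤ := Order.krullDim_eq_top
  rw [this] at hrank
  exact lt_irrefl _ hrank

/-- In a valuation ring of finite rank, for any nonzero `f` in the maximal ideal there is a
nonzero nonunit divisor `e` of `f` such that the maximal ideal is contained in the radical of
`(e)`. -/
lemma aux_exists_e (hrank : ringKrullDim V < ⊤) {f : V}
    (hf : f ∈ IsLocalRing.maximalIdeal V) (hf0 : f ≠ 0) :
    ∃ e : V, e ≠ 0 ∧ ¬ IsUnit e ∧ e ∣ f ∧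
      IsLocalRing.maximalIdeal V ≤ (Ideal.span {e}).radical := by
  haveI := aux_finite_primes hrank
  set m := IsLocalRing.maximalIdeal V with hm
  have hmp : m.IsPrime := (IsLocalRing.maximalIdeal.isMaximal V).isPrime
  -- the set of primes strictly below m
  set P : Set (PrimeSpectrum V) := {p | p.asIdeal < m} with hP
  have hPfin : P.Finite := Set.toFinite _
  have hPne : P.Nonempty := by
    refine ⟨⟨⊥, Ideal.bot_prime⟩, ?_⟩
    simp only [hP, Set.mem_setOf_eq]
    exact lt_of_le_of_ne bot_le (fun h => hf0 (by
      have : f ∈ (⊥ : Ideal V) := h ▸ hf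
      simpa using this))
  obtain ⟨q, hqP, hqmax⟩ := Set.Finite.exists_maximal (Set.toFinite P) hPne
  set Q := q.asIdeal with hQ
  have hQm : Q < m := hqP
  -- every prime strictly below m is ≤ Q
  have hQtop : ∀ p : Ideal V, p.IsPrime → p < m → p ≤ Q := by
    intro p hp hpm
    rcases (ValuationRing.le_total_ideal (A := V)).total p Q with h | h
    · exact h
    · have : q = ⟨p, hp⟩ := le_antisymm ((PrimeSpectrum.asIdeal_le_asIdeal _ _).mpr h)
        (hqmax (y := ⟨p, hp⟩) hpm ((PrimeSpectrum.asIdeal_le_asIdeal _ _).mpr h))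
      have : Q = p := congrArg PrimeSpectrum.asIdeal this
      exact this.ge
  -- radical fact for any e ∈ m \ Q
  have hrad : ∀ e : V, e ∈ m → e ∉ Q → m ≤ (Ideal.span {e}).radical := by
    intro e hem heQ
    rw [Ideal.radical_eq_sInf]
    refine le_sInf ?_
    rintro p ⟨hsp, hp⟩
    have hep : e ∈ p := hsp (Ideal.subset_span rfl)
    have hpm : p ≤ m := IsLocalRing.le_maximalIdeal hp.ne_top
    rcases eq_or_lt_of_le hpm with h | h
    · rw [h]
    · exact absurd (hQtop p hp h hep) heQ
  by_cases hfQ : f ∈ Q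
  · -- pick e ∈ m \ Q
    obtain ⟨e, hem, heQ⟩ := SetLike.exists_of_lt hQm
    refine ⟨e, fun h0 => heQ (h0 ▸ Q.zero_mem),
      fun hu => mem_nonunits_iff.mp ((IsLocalRing.mem_maximalIdeal e).mp hem) hu, ?_,
      hrad e hem heQ⟩
    rcases ValuationRing.dvd_total e f with h | h
    · exact h
    · exact absurd ((Ideal.span_singleton_le_iff_mem Q).mpr hfQ
        (Ideal.mem_span_singleton.mpr h)) heQ
  · exact ⟨f, hf0, fun hu => (hmp.ne_top (Ideal.eq_top_of_isUnit_mem _ hf hu)), dvd_refl f,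
      hrad f hf hfQ⟩

end AuxAlg

section AuxCat

variable {V : Type} [CommRing V] (I : Ideal V)

instance selfLERadical_isCofilteredOrEmpty :
    IsCofilteredOrEmpty (localCohomology.SelfLERadical I) where
  cone_objs X Y := by
    have hrad : I ≤ (X.obj ⊓ Y.obj).radical := by
      intro t ht
      obtain ⟨n, hn⟩ := X.property ht
      obtain ⟨k, hk⟩ := Y.property ht
      refine ⟨n + k, Submodule.mem_inf.mpr ⟨?_, ?_⟩⟩
      · rw [pow_add]; exact Ideal.mul_mem_right _ _ hn
      · rw [pow_add]; exact Ideal.mul_mem_left _ _ hk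
    exact ⟨⟨X.obj ⊓ Y.obj, hrad⟩, ObjectProperty.homMk (homOfLE inf_le_left),
      ObjectProperty.homMk (homOfLE inf_le_right), trivial⟩
  cone_maps X Y f g := ⟨X, 𝟙 X, ObjectProperty.hom_ext (h := Subsingleton.elim _ _)⟩

instance selfLERadical_isCofiltered : IsCofiltered (localCohomology.SelfLERadical I) :=
  { nonempty := inferInstance }

/-- A nonzero element of `H⁰_I(M)` coming from a morphism `V/J₀ ⟶ M` which remains nonzero
after precomposition with all transition maps of the diagram. -/
lemma aux_nontrivial (M : ModuleCat.{0} V) (J₀ : localCohomology.SelfLERadical I)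
    (φ : (localCohomology.ringModIdeals
      (localCohomology.selfLERadicalDiagram I)).obj J₀ ⟶ M)
    (hφ : ∀ (J₁ : localCohomology.SelfLERadical I) (w : J₁ ⟶ J₀),
      (localCohomology.ringModIdeals (localCohomology.selfLERadicalDiagram I)).map w ≫ φ ≠ 0) :
    Nontrivial ((localCohomology.ofSelfLERadical I 0).obj M) := by
  classical
  let Φ := localCohomology.diagram (localCohomology.selfLERadicalDiagram I) 0
  haveI : HasColimit Φ := localCohomology.hasColimitDiagram.{0,0} _ 0
  let F : (localCohomology.SelfLERadical I)ᵒᵖ ⥤ ModuleCat.{0} V :=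
    Φ ⋙ (CategoryTheory.evaluation _ _).obj M
  -- Ext-degree-0 setup
  let LY : (ModuleCat.{0} V)ᵒᵖ ⥤ ModuleCat.{0} V := (linearYoneda V (ModuleCat.{0} V)).obj M
  haveI h1 : PreservesFiniteLimits (LY ⋙ forget (ModuleCat.{0} V)) :=
    inferInstanceAs (PreservesFiniteLimits (yoneda.obj M))
  haveI h2 : PreservesFiniteLimits LY :=
    preservesFiniteLimits_of_reflects_of_preserves LY (forget _)
  haveI h3 : PreservesFiniteColimits LY.rightOp := preservesFiniteColimits_rightOp LY
  let τ : LY.rightOp.leftDerived 0 ≅ LY.rightOp := LY.rightOp.leftDerivedZeroIsoSelf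
  let X₀ : ModuleCat.{0} V :=
    (localCohomology.ringModIdeals (localCohomology.selfLERadicalDiagram I)).obj J₀
  -- the element of the Ext⁰ stage
  let x : F.obj (op J₀) := by exact (τ.hom.app X₀).unop φ
  -- key: the image of x in the colimit is nonzero
  let cF : ModuleCat.{0} V := colimit F
  have key : Nontrivial cF := by
    refine ⟨colimit.ι F (op J₀) x, 0, fun hzero => ?_⟩
    have h0 : colimit.ι F (op J₀) x = colimit.ι F (op J₀) 0 := by
      rw [hzero]; exact (map_zero (ConcreteCategory.hom (colimit.ι F (op J₀)))).symm
    obtain ⟨k, u, v, huv⟩ := Concrete.colimit_exists_of_rep_eq F _ _ h0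
    rw [map_zero] at huv
    -- unfold F.map u
    set X₁ : ModuleCat.{0} V :=
      (localCohomology.ringModIdeals (localCohomology.selfLERadicalDiagram I)).obj k.unop with hX₁
    set π : X₁ ⟶ X₀ :=
      (localCohomology.ringModIdeals (localCohomology.selfLERadicalDiagram I)).map u.unop with hπ
    have hFu : F.map u = ((LY.rightOp.leftDerived 0).map π).unop := rfl
    -- naturality of τ.inv at π
    have hnat : (τ.inv.app X₀).unop ≫ (LY.rightOp.map π).unop
        = ((LY.rightOp.leftDerived 0).map π).unop ≫ (τ.inv.app X₁).unop := by
      rw [← unop_comp, ← unop_comp, τ.inv.naturality π]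
    have happ : (LY.rightOp.map π).unop ((τ.inv.app X₀).unop x)
        = (τ.inv.app X₁).unop (((LY.rightOp.leftDerived 0).map π).unop x) :=
      ConcreteCategory.congr_hom hnat x
    have hback : (τ.inv.app X₀).unop x = φ := by
      have h' : (τ.hom.app X₀).unop ≫ (τ.inv.app X₀).unop = 𝟙 _ := by
        rw [← unop_comp, Iso.inv_hom_id_app]; rfl
      show ((τ.hom.app X₀).unop ≫ (τ.inv.app X₀).unop) φ = φ
      rw [h']; rfl
    have hx0 : ((LY.rightOp.leftDerived 0).map π).unop x = 0 := by
      rw [← hFu]; exact huv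
    rw [hx0, map_zero, hback] at happ
    have hcomp : π ≫ φ = 0 := happ
    exact hφ k.unop u.unop hcomp
  -- transfer along the evaluation iso
  let iso : (localCohomology.ofSelfLERadical I 0).obj M ≅ cF :=
    colimitObjIsoColimitCompEvaluation Φ M
  exact Equiv.nontrivial ((forget (ModuleCat.{0} V)).mapIso iso).toEquiv

end AuxCat

/-- Depth of a module, defined via vanishing of local cohomology supported on `V(I)`. -/
noncomputable def lcDepth {A : Type} [CommRing A] (I : Ideal A) (M : ModuleCat.{0} A) : ℕ∞ :=
  sSup {n : ℕ∞ | ∀ i : ℕ, (i : ℕ∞) < n →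
    Subsingleton ((localCohomology.ofSelfLERadical I i).obj M)}

/-- A non-discrete valuation ring `V` of finite rank and a nonzero `f ∈ 𝔪_V` satisfy
`depth_V(V/fV) = 0`; concretely, `Γ_{𝔪_V}(V/fV) ≠ 0`. -/
theorem stmt_7 (V : Type) [CommRing V] [IsDomain V] [ValuationRing V]
    (hrank : ringKrullDim V < ⊤)
    (hnd : ¬ IsDiscreteValuationRing V)
    (f : V) (hf : f ∈ IsLocalRing.maximalIdeal V) (hf0 : f ≠ 0) :
    lcDepth (IsLocalRing.maximalIdeal V) (ModuleCat.of V (V ⧸ Ideal.span {f})) = 0 ∧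
    Nontrivial ((localCohomology.ofSelfLERadical (IsLocalRing.maximalIdeal V) 0).obj
      (ModuleCat.of V (V ⧸ Ideal.span {f}))) := by
  classical
  obtain ⟨e, he0, heu, ⟨g, hfg⟩, herad⟩ := aux_exists_e hrank hf hf0
  -- `g ∉ (f)`
  have hg0 : g ≠ 0 := fun h0 => hf0 (by rw [hfg, h0, mul_zero])
  have hg : g ∉ Ideal.span {f} := by
    intro hmem
    rw [Ideal.mem_span_singleton] at hmem
    obtain ⟨h, hh⟩ := hmem
    have : g * 1 = g * (e * h) := by
      rw [mul_one]
      calc g = f * h := hh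
      _ = g * (e * h) := by rw [hfg]; ring
    have : (1 : V) = e * h := mul_left_cancel₀ hg0 this
    exact heu (IsUnit.of_mul_eq_one h this.symm)
  set I := IsLocalRing.maximalIdeal V with hI
  set M : ModuleCat.{0} V := ModuleCat.of V (V ⧸ Ideal.span {f}) with hM
  -- the object of the diagram and the morphism
  let J₀ : localCohomology.SelfLERadical I := ⟨Ideal.span {e}, herad⟩
  let ψ : V →ₗ[V] (V ⧸ Ideal.span {f}) :=
    LinearMap.toSpanSingleton V _ (Submodule.Quotient.mk g)
  have hψ : Ideal.span {e} ≤ LinearMap.ker ψ := by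
    rw [Ideal.span_singleton_le_iff_mem]
    rw [LinearMap.mem_ker]
    show e • (Submodule.Quotient.mk g : V ⧸ Ideal.span {f}) = 0
    rw [← Submodule.Quotient.mk_smul, smul_eq_mul, ← hfg]
    exact (Submodule.Quotient.mk_eq_zero _).mpr (Ideal.mem_span_singleton_self f)
  let φ₀ : (V ⧸ Ideal.span {e}) →ₗ[V] (V ⧸ Ideal.span {f}) :=
    Submodule.liftQ _ ψ hψ
  have hφ₀ : φ₀ (Submodule.Quotient.mk 1) = Submodule.Quotient.mk g := by
    show ψ 1 = Submodule.Quotient.mk g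
    simp [ψ]
  let φ : (localCohomology.ringModIdeals
      (localCohomology.selfLERadicalDiagram I)).obj J₀ ⟶ M := by exact ModuleCat.ofHom φ₀
  have hφ : ∀ (J₁ : localCohomology.SelfLERadical I) (w : J₁ ⟶ J₀),
      (localCohomology.ringModIdeals (localCohomology.selfLERadicalDiagram I)).map w ≫ φ ≠ 0 := by
    intro J₁ w hc
    have h1 := LinearMap.congr_fun (congrArg ModuleCat.Hom.hom hc) (Submodule.Quotient.mk (1 : V))
    have h2 : φ₀ (Submodule.mapQ J₁.obj (Ideal.span {e}) LinearMap.id w.hom.down.down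
        (Submodule.Quotient.mk 1)) = φ₀ (Submodule.Quotient.mk 1) := by
      rw [Submodule.mapQ_apply]
      rfl
    have h3 : φ₀ (Submodule.Quotient.mk 1) = 0 := by
      rw [← h2]; exact h1
    rw [hφ₀] at h3
    exact hg ((Submodule.Quotient.mk_eq_zero _).mp h3)
  have main : Nontrivial ((localCohomology.ofSelfLERadical I 0).obj M) :=
    aux_nontrivial I M J₀ φ hφ
  refine ⟨?_, main⟩
  -- depth is zero
  refine le_antisymm ?_ zero_le
  refine sSup_le ?_
  intro n hn
  by_contra hle
  rw [not_le] at hle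
  have h0n : ((0 : ℕ) : ℕ∞) < n := by exact_mod_cast hle
  have := hn 0 h0n
  exact (not_subsingleton_iff_nontrivial.mpr main) this
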